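/- Let (P_n) be strongly invariant for the system (A) and let h, k be growth rates. The pair (A,P) is (h,k)-dichotomic if and only if there exists a sequence of norms 𝒩 = {|||·|||_n : n ∈ ℕ} compatible with (P_n) such that h_m|||A_m^n P_n x|||_m ≤ h_n|||P_n x|||_n and k_m|||B_m^n Q_m x|||_n ≤ k_n|||Q_m x|||_m for all m ≥ n and all x ∈ X. -/

import Mathlib

open ContinuousLinearMap Filter

noncomputable section

variable {X : Type*} [NormedAddCommGroup X] [NormedSpace ℝ X]

/-- The evolution operator `A_m^n` associated to the linear difference system
`x_{n+1} = A_n x_n`: `A_m^n = A_{m-1} ⋯ A_n` for `m > n` and `A_n^n = I`. -/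
def evol (A : ℕ → X →L[ℝ] X) : ℕ → ℕ → X →L[ℝ] X
  | 0, _ => 1
  | m + 1, n => if m + 1 ≤ n then 1 else A m ∘L evol A m n

/-- `P` is a projectors sequence. -/
def ProjSeq (P : ℕ → X →L[ℝ] X) : Prop := ∀ n, P n ∘L P n = P n

/-- The projectors sequence `P` is invariant for the system `(A)`. -/
def InvariantFor (A P : ℕ → X →L[ℝ] X) : Prop := ∀ n, A n ∘L P n = P (n + 1) ∘L A n

/-- The projectors sequence `P` is strongly invariant for the system `(A)`: it is invariant and
the restriction of `A_m^n` to `Ker P_n` is an isomorphism from `Ker P_n` onto `Ker P_m`. -/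
def StronglyInvariantFor (A P : ℕ → X →L[ℝ] X) : Prop :=
  InvariantFor A P ∧ ∀ m n : ℕ, n ≤ m →
    Set.BijOn (evol A m n) (LinearMap.ker (P n : X →ₗ[ℝ] X) : Set X) (LinearMap.ker (P m : X →ₗ[ℝ] X) : Set X)

/-- A growth rate: an increasing sequence with values in `[1, ∞)` tending to `∞`. -/
def IsGrowthRate (h : ℕ → ℝ) : Prop :=
  StrictMono h ∧ (∀ n, 1 ≤ h n) ∧ Tendsto h atTop atTop

/-- The pair `(A, P)` is `(h,k)`-dichotomic. -/
def Dichotomic (A P : ℕ → X →L[ℝ] X) (h k : ℕ → ℝ) : Prop :=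
  ∃ d : ℕ → ℝ, (∀ n, 1 ≤ d n) ∧ Monotone d ∧
    ∀ m n : ℕ, n ≤ m → ∀ x : X,
      h m * ‖evol A m n (P n x)‖ ≤ d n * (h n * ‖P n x‖) ∧
      k m * ‖(1 - P n) x‖ ≤ d m * (k n * ‖evol A m n ((1 - P n) x)‖)

/-- The pair `(A, P)` is uniformly `(h,k)`-dichotomic. -/
def UniformDichotomic (A P : ℕ → X →L[ℝ] X) (h k : ℕ → ℝ) : Prop :=
  ∃ d : ℝ, 1 ≤ d ∧
    ∀ m n : ℕ, n ≤ m → ∀ x : X,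
      h m * ‖evol A m n (P n x)‖ ≤ d * (h n * ‖P n x‖) ∧
      k m * ‖(1 - P n) x‖ ≤ d * (k n * ‖evol A m n ((1 - P n) x)‖)

/-- The pair `(A, P)` has `(h,k)`-growth. -/
def HasGrowth (A P : ℕ → X →L[ℝ] X) (h k : ℕ → ℝ) : Prop :=
  ∃ g : ℕ → ℝ, (∀ n, 1 ≤ g n) ∧ Monotone g ∧
    ∀ m n : ℕ, n ≤ m → ∀ x : X,
      h n * ‖evol A m n (P n x)‖ ≤ g n * (h m * ‖P n x‖) ∧
      k n * ‖(1 - P n) x‖ ≤ g m * (k m * ‖evol A m n ((1 - P n) x)‖)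

/-- `N` is a sequence of norms on `X`. -/
def IsNormSeq (N : ℕ → X → ℝ) : Prop :=
  ∀ n, (∀ x y, N n (x + y) ≤ N n x + N n y) ∧
    (∀ (a : ℝ) (x : X), N n (a • x) = |a| * N n x) ∧
    (∀ x, N n x = 0 ↔ x = 0)

/-- The sequence of norms `N` is compatible with the projectors sequence `P`. -/
def NormsCompatible (N : ℕ → X → ℝ) (P : ℕ → X →L[ℝ] X) : Prop :=
  IsNormSeq N ∧ ∃ c : ℕ → ℝ, (∀ n, 1 ≤ c n) ∧ Monotone c ∧
    ∀ (n : ℕ) (x : X), ‖x‖ ≤ N n x ∧ N n x ≤ c n * (‖P n x‖ + ‖(1 - P n) x‖)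

/-- The defining properties of the skew-evolution operator `B` associated to the pair `(A, P)`:
`A_m^n B_m^n Q_m = Q_m`, `B_m^n A_m^n Q_n = Q_n` and `B_m^n Q_m = Q_n B_m^n Q_m` for `m ≥ n`,
where `Q_n = I - P_n`. -/
def SkewEvol (A P : ℕ → X →L[ℝ] X) (B : ℕ → ℕ → X →L[ℝ] X) : Prop :=
  ∀ m n : ℕ, n ≤ m →
    evol A m n ∘L (B m n ∘L (1 - P m)) = 1 - P m ∧
    B m n ∘L (evol A m n ∘L (1 - P n)) = 1 - P n ∧
    B m n ∘L (1 - P m) = (1 - P n) ∘L (B m n ∘L (1 - P m))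

theorem evol_self (A : ℕ → X →L[ℝ] X) (n : ℕ) : evol A n n = 1 := by
  cases n with
  | zero => rfl
  | succ m => simp [evol]

theorem evol_succ (A : ℕ → X →L[ℝ] X) {m n : ℕ} (hnm : n ≤ m) :
    evol A (m + 1) n = A m ∘L evol A m n := by
  simp only [evol]
  rw [if_neg (by omega)]

theorem evol_comp (A : ℕ → X →L[ℝ] X) {j n m : ℕ} (hjn : j ≤ n) (hnm : n ≤ m) (x : X) :
    evol A m n (evol A n j x) = evol A m j x := by
  induction m, hnm using Nat.le_induction with
  | base => rw [evol_self]; simp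
  | succ m hm ih =>
      rw [evol_succ A hm, evol_succ A (hjn.trans hm)]
      simp [ContinuousLinearMap.comp_apply, ih]

theorem evol_inv {A P : ℕ → X →L[ℝ] X} (hI : InvariantFor A P)
    {n m : ℕ} (hnm : n ≤ m) (x : X) :
    evol A m n (P n x) = P m (evol A m n x) := by
  induction m, hnm using Nat.le_induction with
  | base => rw [evol_self]; simp
  | succ m hm ih =>
      rw [evol_succ A hm]
      have h2 := ContinuousLinearMap.ext_iff.mp (hI m) (evol A m n x)
      simp only [ContinuousLinearMap.comp_apply] at h2 ⊢
      rw [ih, h2]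

/-- Stable part of the Lyapunov norm. -/
def Sfun (A P : ℕ → X →L[ℝ] X) (h : ℕ → ℝ) (n : ℕ) (x : X) (m : ℕ) : ℝ :=
  if n ≤ m then h m / h n * ‖evol A m n (P n x)‖ else 0

/-- Unstable part of the Lyapunov norm. -/
def Tfun (P : ℕ → X →L[ℝ] X) (B : ℕ → ℕ → X →L[ℝ] X) (k : ℕ → ℝ) (n : ℕ) (x : X) (j : ℕ) : ℝ :=
  if j ≤ n then k n / k j * ‖B n j ((1 - P n) x)‖ else 0

theorem stmt_5 [CompleteSpace X] (A P : ℕ → X →L[ℝ] X) (B : ℕ → ℕ → X →L[ℝ] X)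
    (hP : ProjSeq P) (hSI : StronglyInvariantFor A P) (hB : SkewEvol A P B)
    (h k : ℕ → ℝ) (hh : IsGrowthRate h) (hk : IsGrowthRate k) :
    Dichotomic A P h k ↔
      ∃ N : ℕ → X → ℝ, NormsCompatible N P ∧
        ∀ m n : ℕ, n ≤ m → ∀ x : X,
          h m * N m (evol A m n (P n x)) ≤ h n * N n (P n x) ∧
          k m * N n (B m n ((1 - P m) x)) ≤ k n * N m ((1 - P m) x) := by
  obtain ⟨hI, hSIbij⟩ := hSI
  have hpos : ∀ n, (0:ℝ) < h n := fun n => lt_of_lt_of_le one_pos (hh.2.1 n)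
  have kpos : ∀ n, (0:ℝ) < k n := fun n => lt_of_lt_of_le one_pos (hk.2.1 n)
  have hPP : ∀ n (x : X), P n (P n x) = P n x := by
    intro n x
    have := ContinuousLinearMap.ext_iff.mp (hP n) x
    simpa [ContinuousLinearMap.comp_apply] using this
  have hPQ : ∀ n (x : X), P n ((1 - P n) x) = 0 := by
    intro n x
    rw [ContinuousLinearMap.sub_apply, ContinuousLinearMap.one_apply, map_sub, hPP, sub_self]
  have hQP : ∀ n (x : X), (1 - P n) (P n x) = 0 := by
    intro n x
    rw [ContinuousLinearMap.sub_apply, ContinuousLinearMap.one_apply, hPP, sub_self]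
  have hQQ : ∀ n (x : X), (1 - P n) ((1 - P n) x) = (1 - P n) x := by
    intro n x
    conv_lhs => rw [ContinuousLinearMap.sub_apply, ContinuousLinearMap.one_apply]
    rw [hPQ, sub_zero]
  have hdec : ∀ n (x : X), P n x + (1 - P n) x = x := by
    intro n x
    rw [ContinuousLinearMap.sub_apply, ContinuousLinearMap.one_apply]
    abel
  have hB1 : ∀ m n, n ≤ m → ∀ x : X, evol A m n (B m n ((1 - P m) x)) = (1 - P m) x := by
    intro m n hnm x
    have := ContinuousLinearMap.ext_iff.mp (hB m n hnm).1 x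
    simpa [ContinuousLinearMap.comp_apply] using this
  have hB2 : ∀ m n, n ≤ m → ∀ x : X, B m n (evol A m n ((1 - P n) x)) = (1 - P n) x := by
    intro m n hnm x
    have := ContinuousLinearMap.ext_iff.mp (hB m n hnm).2.1 x
    simpa [ContinuousLinearMap.comp_apply] using this
  have hB3 : ∀ m n, n ≤ m → ∀ x : X, (1 - P n) (B m n ((1 - P m) x)) = B m n ((1 - P m) x) := by
    intro m n hnm x
    have := ContinuousLinearMap.ext_iff.mp (hB m n hnm).2.2 x
    simp only [ContinuousLinearMap.comp_apply] at this
    exact this.symm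
  have hBker : ∀ m n, n ≤ m → ∀ x : X, P n (B m n ((1 - P m) x)) = 0 := by
    intro m n hnm x
    conv_lhs => rw [← hB3 m n hnm x]
    exact hPQ n _
  have hBnn : ∀ n (x : X), B n n ((1 - P n) x) = (1 - P n) x := by
    intro n x
    have := hB2 n n le_rfl x
    rwa [evol_self, ContinuousLinearMap.one_apply] at this
  have hBcomp : ∀ j n m, j ≤ n → n ≤ m → ∀ x : X,
      B n j ((1 - P n) (B m n ((1 - P m) x))) = B m j ((1 - P m) x) := by
    intro j n m hjn hnm x
    have hmem1 : B n j ((1 - P n) (B m n ((1 - P m) x))) ∈ (LinearMap.ker (P j : X →ₗ[ℝ] X) : Set X) := by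
      simp only [SetLike.mem_coe, LinearMap.mem_ker]
      exact hBker n j hjn _
    have hmem2 : B m j ((1 - P m) x) ∈ (LinearMap.ker (P j : X →ₗ[ℝ] X) : Set X) := by
      simp only [SetLike.mem_coe, LinearMap.mem_ker]
      exact hBker m j (hjn.trans hnm) x
    have him : evol A m j (B n j ((1 - P n) (B m n ((1 - P m) x)))) = (1 - P m) x := by
      rw [← evol_comp A hjn hnm, hB1 n j hjn _, hB3 m n hnm x, hB1 m n hnm x]
    have him2 : evol A m j (B m j ((1 - P m) x)) = (1 - P m) x := hB1 m j (hjn.trans hnm) x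
    exact (hSIbij m j (hjn.trans hnm)).injOn hmem1 hmem2 (him.trans him2.symm)
  have cancel : ∀ a b t : ℝ, 0 < a → a * (b / a * t) = b * t := by
    intro a b t ha
    field_simp
  constructor
  · rintro ⟨d, hd1, hdm, hdich⟩
    have hdpos : ∀ n, (0:ℝ) < d n := fun n => lt_of_lt_of_le one_pos (hd1 n)
    have hS0 : ∀ n (x : X) m', 0 ≤ Sfun A P h n x m' := by
      intro n x m'; unfold Sfun; split_ifs
      · exact mul_nonneg (div_nonneg (hpos _).le (hpos _).le) (norm_nonneg _)
      · exact le_rfl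
    have hT0 : ∀ n (x : X) j, 0 ≤ Tfun P B k n x j := by
      intro n x j; unfold Tfun; split_ifs
      · exact mul_nonneg (div_nonneg (kpos _).le (kpos _).le) (norm_nonneg _)
      · exact le_rfl
    have hSfb : ∀ n (x : X) m', Sfun A P h n x m' ≤ d n * ‖P n x‖ := by
      intro n x m'; unfold Sfun; split_ifs with hm
      · have hd := (hdich m' n hm x).1
        rw [div_mul_eq_mul_div, div_le_iff₀ (hpos n)]
        calc h m' * ‖evol A m' n (P n x)‖ ≤ d n * (h n * ‖P n x‖) := hd
          _ = d n * ‖P n x‖ * h n := by ring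
      · exact mul_nonneg (hdpos n).le (norm_nonneg _)
    have hTfb : ∀ n (x : X) j, Tfun P B k n x j ≤ d n * ‖(1 - P n) x‖ := by
      intro n x j; unfold Tfun; split_ifs with hj
      · have hd := (hdich n j hj (B n j ((1 - P n) x))).2
        rw [hB3 n j hj x, hB1 n j hj x] at hd
        rw [div_mul_eq_mul_div, div_le_iff₀ (kpos j)]
        calc k n * ‖B n j ((1 - P n) x)‖ ≤ d n * (k j * ‖(1 - P n) x‖) := hd
          _ = d n * ‖(1 - P n) x‖ * k j := by ring
      · exact mul_nonneg (hdpos n).le (norm_nonneg _)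
    have hSbdd : ∀ n (x : X), BddAbove (Set.range (Sfun A P h n x)) := by
      intro n x
      exact ⟨d n * ‖P n x‖, by rintro y ⟨m', rfl⟩; exact hSfb n x m'⟩
    have hTbdd : ∀ n (x : X), BddAbove (Set.range (Tfun P B k n x)) := by
      intro n x
      exact ⟨d n * ‖(1 - P n) x‖, by rintro y ⟨j, rfl⟩; exact hTfb n x j⟩
    have hSval : ∀ n (x : X), Sfun A P h n x n = ‖P n x‖ := by
      intro n x; unfold Sfun
      rw [if_pos le_rfl, div_self (hpos n).ne', evol_self, one_mul,
        ContinuousLinearMap.one_apply]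
    have hTval : ∀ n (x : X), Tfun P B k n x n = ‖(1 - P n) x‖ := by
      intro n x; unfold Tfun
      rw [if_pos le_rfl, div_self (kpos n).ne', one_mul, hBnn n x]
    have hSle : ∀ n (x : X), ‖P n x‖ ≤ ⨆ m', Sfun A P h n x m' := by
      intro n x
      rw [← hSval n x]
      exact le_ciSup (hSbdd n x) n
    have hTle : ∀ n (x : X), ‖(1 - P n) x‖ ≤ ⨆ j, Tfun P B k n x j := by
      intro n x
      rw [← hTval n x]
      exact le_ciSup (hTbdd n x) n
    have hSsup0 : ∀ n (x : X), 0 ≤ ⨆ m', Sfun A P h n x m' := fun n x =>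
      Real.iSup_nonneg (hS0 n x)
    have hTsup0 : ∀ n (x : X), 0 ≤ ⨆ j, Tfun P B k n x j := fun n x =>
      Real.iSup_nonneg (hT0 n x)
    have hSsup_le : ∀ n (x : X), (⨆ m', Sfun A P h n x m') ≤ d n * ‖P n x‖ := fun n x =>
      Real.iSup_le (hSfb n x) (mul_nonneg (hdpos n).le (norm_nonneg _))
    have hTsup_le : ∀ n (x : X), (⨆ j, Tfun P B k n x j) ≤ d n * ‖(1 - P n) x‖ := fun n x =>
      Real.iSup_le (hTfb n x) (mul_nonneg (hdpos n).le (norm_nonneg _))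
    have hSzero : ∀ n (x : X), P n x = 0 → (⨆ m', Sfun A P h n x m') = 0 := by
      intro n x hx
      have e : ∀ m', Sfun A P h n x m' = 0 := by
        intro m'; unfold Sfun; split_ifs
        · rw [hx]; simp
        · rfl
      simp only [e, ciSup_const]
    have hTzero : ∀ n (x : X), (1 - P n) x = 0 → (⨆ j, Tfun P B k n x j) = 0 := by
      intro n x hx
      have e : ∀ j, Tfun P B k n x j = 0 := by
        intro j; unfold Tfun; split_ifs
        · rw [hx]; simp
        · rfl
      simp only [e, ciSup_const]
    refine ⟨fun n x => (⨆ m', Sfun A P h n x m') + (⨆ j, Tfun P B k n x j),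
      ⟨?_, d, hd1, hdm, ?_⟩, ?_⟩
    · intro n
      refine ⟨?_, ?_, ?_⟩
      · intro x y
        have hs : (⨆ m', Sfun A P h n (x + y) m') ≤
            (⨆ m', Sfun A P h n x m') + (⨆ m', Sfun A P h n y m') := by
          refine Real.iSup_le (fun m' => ?_) (add_nonneg (hSsup0 n x) (hSsup0 n y))
          have h1 : Sfun A P h n (x + y) m' ≤ Sfun A P h n x m' + Sfun A P h n y m' := by
            unfold Sfun; split_ifs
            · rw [← mul_add]
              refine mul_le_mul_of_nonneg_left ?_ (div_nonneg (hpos _).le (hpos _).le)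
              rw [map_add, map_add]
              exact norm_add_le _ _
            · simp
          exact h1.trans (add_le_add (le_ciSup (hSbdd n x) m') (le_ciSup (hSbdd n y) m'))
        have ht : (⨆ j, Tfun P B k n (x + y) j) ≤
            (⨆ j, Tfun P B k n x j) + (⨆ j, Tfun P B k n y j) := by
          refine Real.iSup_le (fun j => ?_) (add_nonneg (hTsup0 n x) (hTsup0 n y))
          have h1 : Tfun P B k n (x + y) j ≤ Tfun P B k n x j + Tfun P B k n y j := by
            unfold Tfun; split_ifs
            · rw [← mul_add]
              refine mul_le_mul_of_nonneg_left ?_ (div_nonneg (kpos _).le (kpos _).le)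
              rw [map_add, map_add]
              exact norm_add_le _ _
            · simp
          exact h1.trans (add_le_add (le_ciSup (hTbdd n x) j) (le_ciSup (hTbdd n y) j))
        dsimp only
        linarith
      · intro a x
        have hs : (⨆ m', Sfun A P h n (a • x) m') = |a| * ⨆ m', Sfun A P h n x m' := by
          rw [Real.mul_iSup_of_nonneg (abs_nonneg a)]
          congr 1; funext m'
          unfold Sfun; split_ifs
          · rw [map_smul, map_smul, norm_smul, Real.norm_eq_abs]; ring
          · simp
        have ht : (⨆ j, Tfun P B k n (a • x) j) = |a| * ⨆ j, Tfun P B k n x j := by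
          rw [Real.mul_iSup_of_nonneg (abs_nonneg a)]
          congr 1; funext j
          unfold Tfun; split_ifs
          · rw [map_smul, map_smul, norm_smul, Real.norm_eq_abs]; ring
          · simp
        dsimp only
        rw [hs, ht, mul_add]
      · intro x
        dsimp only
        constructor
        · intro hx
          have e1 : ‖P n x‖ ≤ 0 := by linarith [hSle n x, hTsup0 n x]
          have e2 : ‖(1 - P n) x‖ ≤ 0 := by linarith [hTle n x, hSsup0 n x]
          have f1 : P n x = 0 := norm_le_zero_iff.mp e1
          have f2 : (1 - P n) x = 0 := norm_le_zero_iff.mp e2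
          rw [← hdec n x, f1, f2, add_zero]
        · intro hx; subst hx
          rw [hSzero n 0 (by simp), hTzero n 0 (by simp), add_zero]
    · intro n x
      dsimp only
      constructor
      · calc ‖x‖ = ‖P n x + (1 - P n) x‖ := by rw [hdec]
          _ ≤ ‖P n x‖ + ‖(1 - P n) x‖ := norm_add_le _ _
          _ ≤ _ := add_le_add (hSle n x) (hTle n x)
      · calc (⨆ m', Sfun A P h n x m') + (⨆ j, Tfun P B k n x j)
            ≤ d n * ‖P n x‖ + d n * ‖(1 - P n) x‖ :=
              add_le_add (hSsup_le n x) (hTsup_le n x)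
          _ = d n * (‖P n x‖ + ‖(1 - P n) x‖) := by ring
    · intro m n hnm x
      dsimp only
      constructor
      · have hy : P m (evol A m n (P n x)) = evol A m n (P n x) := by
          rw [evol_inv hI hnm x]
          exact hPP m _
        have hQy : (1 - P m) (evol A m n (P n x)) = 0 := by
          rw [ContinuousLinearMap.sub_apply, ContinuousLinearMap.one_apply, hy, sub_self]
        rw [hTzero m _ hQy, hTzero n (P n x) (hQP n x), add_zero, add_zero,
          Real.mul_iSup_of_nonneg (hpos m).le]
        refine Real.iSup_le (fun l => ?_) (mul_nonneg (hpos n).le (hSsup0 n (P n x)))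
        by_cases hl : m ≤ l
        · have e2 : Sfun A P h m (evol A m n (P n x)) l = h l / h m * ‖evol A l n (P n x)‖ := by
            unfold Sfun
            rw [if_pos hl, hy, evol_comp A hnm hl]
          have e3 : Sfun A P h n (P n x) l = h l / h n * ‖evol A l n (P n x)‖ := by
            unfold Sfun
            rw [if_pos (hnm.trans hl), hPP n x]
          calc h m * Sfun A P h m (evol A m n (P n x)) l
              = h n * Sfun A P h n (P n x) l := by
                rw [e2, e3, cancel _ _ _ (hpos m), cancel _ _ _ (hpos n)]
            _ ≤ h n * ⨆ l', Sfun A P h n (P n x) l' :=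
                mul_le_mul_of_nonneg_left (le_ciSup (hSbdd n (P n x)) l) (hpos n).le
        · have e0 : Sfun A P h m (evol A m n (P n x)) l = 0 := by
            unfold Sfun; rw [if_neg hl]
          rw [e0, mul_zero]
          exact mul_nonneg (hpos n).le (hSsup0 n (P n x))
      · have hSz : (⨆ l, Sfun A P h n (B m n ((1 - P m) x)) l) = 0 :=
          hSzero n _ (hBker m n hnm x)
        rw [hSz, zero_add]
        have key : k m * (⨆ j, Tfun P B k n (B m n ((1 - P m) x)) j) ≤
            k n * ⨆ j, Tfun P B k m ((1 - P m) x) j := by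
          rw [Real.mul_iSup_of_nonneg (kpos m).le]
          refine Real.iSup_le (fun j => ?_) (mul_nonneg (kpos n).le (hTsup0 m _))
          by_cases hj : j ≤ n
          · have e2 : Tfun P B k n (B m n ((1 - P m) x)) j =
                k n / k j * ‖B m j ((1 - P m) x)‖ := by
              unfold Tfun
              rw [if_pos hj, hBcomp j n m hj hnm x]
            have e3 : Tfun P B k m ((1 - P m) x) j = k m / k j * ‖B m j ((1 - P m) x)‖ := by
              unfold Tfun
              rw [if_pos (hj.trans hnm), hQQ m x]
            calc k m * Tfun P B k n (B m n ((1 - P m) x)) j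
                = k n * Tfun P B k m ((1 - P m) x) j := by
                  rw [e2, e3]
                  field_simp
              _ ≤ _ := mul_le_mul_of_nonneg_left (le_ciSup (hTbdd m ((1 - P m) x)) j)
                  (kpos n).le
          · have e0 : Tfun P B k n (B m n ((1 - P m) x)) j = 0 := by
              unfold Tfun; rw [if_neg hj]
            rw [e0, mul_zero]
            exact mul_nonneg (kpos n).le (hTsup0 m _)
        have hs0 : 0 ≤ k n * ⨆ l, Sfun A P h m ((1 - P m) x) l :=
          mul_nonneg (kpos n).le (hSsup0 m _)
        rw [mul_add]
        linarith
  · rintro ⟨N, ⟨hNseq, c, hc1, hcm, hcomp⟩, hkey⟩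
    refine ⟨c, hc1, hcm, fun m n hnm x => ⟨?_, ?_⟩⟩
    · calc h m * ‖evol A m n (P n x)‖
          ≤ h m * N m (evol A m n (P n x)) :=
            mul_le_mul_of_nonneg_left (hcomp m _).1 (hpos m).le
        _ ≤ h n * N n (P n x) := (hkey m n hnm x).1
        _ ≤ h n * (c n * (‖P n (P n x)‖ + ‖(1 - P n) (P n x)‖)) :=
            mul_le_mul_of_nonneg_left (hcomp n _).2 (hpos n).le
        _ = c n * (h n * ‖P n x‖) := by
            rw [hPP n x, hQP n x, norm_zero, add_zero]; ring
    · have hPm0 : P m (evol A m n ((1 - P n) x)) = 0 := by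
        rw [← evol_inv hI hnm ((1 - P n) x), hPQ n x, map_zero]
      have hz : (1 - P m) (evol A m n ((1 - P n) x)) = evol A m n ((1 - P n) x) := by
        rw [ContinuousLinearMap.sub_apply, ContinuousLinearMap.one_apply, hPm0, sub_zero]
      have h2 := (hkey m n hnm (evol A m n ((1 - P n) x))).2
      rw [hz, hB2 m n hnm x] at h2
      calc k m * ‖(1 - P n) x‖
          ≤ k m * N n ((1 - P n) x) :=
            mul_le_mul_of_nonneg_left (hcomp n _).1 (kpos m).le
        _ ≤ k n * N m (evol A m n ((1 - P n) x)) := h2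
        _ ≤ k n * (c m * (‖P m (evol A m n ((1 - P n) x))‖ +
              ‖(1 - P m) (evol A m n ((1 - P n) x))‖)) :=
            mul_le_mul_of_nonneg_left (hcomp m _).2 (kpos n).le
        _ = c m * (k n * ‖evol A m n ((1 - P n) x)‖) := by
            rw [hz, hPm0, norm_zero, zero_add]; ring

end
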